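/- arXiv:2112.12436 — 4 statements merged into one kernel-verified Lean document; each statement's English description precedes it below -/
import Mathlib

section
/- Let n ≥ 2 be an integer and let q₁, q₂ be nonzero complex numbers with q₁ + (−1)ⁿq₂ ≠ 0. Then the quotient ring R = ℂ[h₁,h₂]/( (∑_{k=0}^{n} h₁ᵏ(−h₂)^{n−k}) − q₁ − (−1)ⁿq₂ , h₁^{n+1} − q₁(h₁+h₂) ) is a finite-dimensional ℂ-vector space and is reduced; equivalently, R is a semisimple ring, i.e. isomorphic to a finite product of copies of ℂ. -/
set_option synthInstance.maxHeartbeats 1000000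
set_option maxHeartbeats 1000000

open MvPolynomial

/-- The small quantum cohomology ring of `Fl(1,n;n+1)` with quantum parameters
specialized to `q₁, q₂`: the quotient of `ℂ[h₁,h₂]` by the two relations. -/
noncomputable def qhFlIdeal (n : ℕ) (q₁ q₂ : ℂ) : Ideal (MvPolynomial (Fin 2) ℂ) :=
  Ideal.span
    { (∑ k ∈ Finset.range (n + 1), (X 0 : MvPolynomial (Fin 2) ℂ) ^ k * (-X 1) ^ (n - k))
        - C q₁ - C ((-1 : ℂ) ^ n * q₂),
      (X 0 : MvPolynomial (Fin 2) ℂ) ^ (n + 1) - C q₁ * (X 0 + X 1) }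

noncomputable def wpoly (n : ℕ) (q₁ : ℂ) : Polynomial ℂ :=
  1 - Polynomial.C q₁⁻¹ * Polynomial.X ^ n

noncomputable def gpoly (n : ℕ) (q₁ q₂ : ℂ) : Polynomial ℂ :=
  Polynomial.C q₁ * (wpoly n q₁) ^ (n + 1) + Polynomial.C ((-1 : ℂ) ^ n * q₂)

noncomputable def ypoly (n : ℕ) (q₁ : ℂ) : Polynomial ℂ :=
  Polynomial.C q₁⁻¹ * Polynomial.X ^ (n + 1) - Polynomial.X

noncomputable def phiHom (n : ℕ) (q₁ : ℂ) : MvPolynomial (Fin 2) ℂ →ₐ[ℂ] Polynomial ℂ :=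
  MvPolynomial.aeval ![Polynomial.X, ypoly n q₁]

lemma hCq (q₁ : ℂ) (hq₁ : q₁ ≠ 0) :
    Polynomial.C q₁ * Polynomial.C q₁⁻¹ = 1 := by
  rw [← Polynomial.C_mul, mul_inv_cancel₀ hq₁, Polynomial.C_1]

lemma sum_geom_eq (n : ℕ) (q₁ : ℂ) (hq₁ : q₁ ≠ 0) :
    (∑ k ∈ Finset.range (n + 1),
      Polynomial.X ^ k * (Polynomial.X * wpoly n q₁) ^ (n - k)) =
    Polynomial.C q₁ * (1 - (wpoly n q₁) ^ (n + 1)) := by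
  have hne : Polynomial.X - Polynomial.X * wpoly n q₁ ≠ 0 := by
    have h : Polynomial.X - Polynomial.X * wpoly n q₁
        = Polynomial.C q₁⁻¹ * Polynomial.X ^ (n + 1) := by
      unfold wpoly; ring
    rw [h]
    exact mul_ne_zero (Polynomial.C_ne_zero.mpr (inv_ne_zero hq₁))
      (pow_ne_zero _ Polynomial.X_ne_zero)
  apply mul_right_cancel₀ hne
  have h1 := geom_sum₂_mul Polynomial.X (Polynomial.X * wpoly n q₁) (n + 1)
  simp only [Nat.add_sub_cancel] at h1
  rw [h1, mul_pow]
  have hC := hCq q₁ hq₁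
  unfold wpoly
  linear_combination (-(Polynomial.X ^ (n + 1) *
    (1 - (1 - Polynomial.C q₁⁻¹ * Polynomial.X ^ n) ^ (n + 1)))) * hC

lemma phi_rel1 (n : ℕ) (q₁ q₂ : ℂ) (hq₁ : q₁ ≠ 0) :
    phiHom n q₁ ((∑ k ∈ Finset.range (n + 1),
        (X 0 : MvPolynomial (Fin 2) ℂ) ^ k * (-X 1) ^ (n - k))
        - C q₁ - C ((-1 : ℂ) ^ n * q₂)) = - gpoly n q₁ q₂ := by
  have hy : -(ypoly n q₁) = Polynomial.X * wpoly n q₁ := by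
    unfold ypoly wpoly; ring
  rw [map_sub, map_sub, map_sum]
  simp only [map_mul, map_pow, map_neg, MvPolynomial.aeval_X, MvPolynomial.aeval_C,
    Matrix.cons_val_zero, Matrix.cons_val_one, Matrix.head_cons, phiHom,
    Polynomial.algebraMap_eq]
  rw [hy, sum_geom_eq n q₁ hq₁]
  unfold gpoly
  simp only [map_mul, map_pow, map_neg, map_one]
  ring

lemma phi_rel2 (n : ℕ) (q₁ : ℂ) (hq₁ : q₁ ≠ 0) :
    phiHom n q₁ ((X 0 : MvPolynomial (Fin 2) ℂ) ^ (n + 1) - C q₁ * (X 0 + X 1)) = 0 := by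
  have hC := hCq q₁ hq₁
  simp only [map_sub, map_mul, map_add, map_pow, MvPolynomial.aeval_X, MvPolynomial.aeval_C,
    Matrix.cons_val_zero, Matrix.cons_val_one, Matrix.head_cons, phiHom,
    Polynomial.algebraMap_eq]
  unfold ypoly
  linear_combination (-(Polynomial.X ^ (n + 1) : Polynomial ℂ)) * hC

lemma quot_equiv (n : ℕ) (q₁ q₂ : ℂ) (hq₁ : q₁ ≠ 0) :
    Nonempty ((MvPolynomial (Fin 2) ℂ ⧸ qhFlIdeal n q₁ q₂) ≃ₐ[ℂ]
      (Polynomial ℂ ⧸ Ideal.span {gpoly n q₁ q₂})) := by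
  set I := qhFlIdeal n q₁ q₂ with hI
  set J := Ideal.span {gpoly n q₁ q₂} with hJ
  set Φ : MvPolynomial (Fin 2) ℂ →ₐ[ℂ] Polynomial ℂ ⧸ J :=
    (Ideal.Quotient.mkₐ ℂ J).comp (phiHom n q₁) with hΦdef
  have hΦ : ∀ a ∈ I, Φ a = 0 := by
    have hle : I ≤ RingHom.ker Φ := by
      rw [hI, qhFlIdeal, Ideal.span_le]
      rintro p hp
      simp only [Set.mem_insert_iff, Set.mem_singleton_iff] at hp
      have hg : Ideal.Quotient.mk J (gpoly n q₁ q₂) = 0 :=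
        Ideal.Quotient.eq_zero_iff_mem.mpr (Ideal.subset_span rfl)
      rcases hp with rfl | rfl
      · show Φ _ = 0
        rw [hΦdef, AlgHom.comp_apply, phi_rel1 n q₁ q₂ hq₁, Ideal.Quotient.mkₐ_eq_mk,
          map_neg, hg, neg_zero]
      · show Φ _ = 0
        rw [hΦdef, AlgHom.comp_apply, phi_rel2 n q₁ hq₁, Ideal.Quotient.mkₐ_eq_mk, map_zero]
    exact fun a ha => hle ha
  set φbar := Ideal.Quotient.liftₐ I Φ hΦ with hφbar
  set x0 : MvPolynomial (Fin 2) ℂ ⧸ I := Ideal.Quotient.mk I (X 0) with hx0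
  set ψ : Polynomial ℂ →ₐ[ℂ] (MvPolynomial (Fin 2) ℂ ⧸ I) := Polynomial.aeval x0 with hψ
  have hψφ : ψ.comp (phiHom n q₁) = Ideal.Quotient.mkₐ ℂ I := by
    apply MvPolynomial.algHom_ext
    intro i
    fin_cases i
    · simp [hψ, phiHom, hx0]
    · -- ψ (ypoly n q₁) = mk (X 1)
      have hrel2 : Ideal.Quotient.mk I
          ((X 0 : MvPolynomial (Fin 2) ℂ) ^ (n + 1) - C q₁ * (X 0 + X 1)) = 0 := by
        apply Ideal.Quotient.eq_zero_iff_mem.mpr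
        rw [hI, qhFlIdeal]
        exact Ideal.subset_span (Set.mem_insert_of_mem _ rfl)
      rw [map_sub, map_mul, map_add, map_pow, sub_eq_zero] at hrel2
      have key : ψ (ypoly n q₁) = Ideal.Quotient.mk I (X 1) := by
        rw [hψ]
        simp only [ypoly, map_sub, map_mul, map_pow, Polynomial.aeval_X, Polynomial.aeval_C]
        rw [hx0, hrel2]
        have hCm : Ideal.Quotient.mk I (C q₁) = algebraMap ℂ _ q₁ := by
          rw [← MvPolynomial.algebraMap_eq]; rfl
        rw [hCm, ← mul_assoc, ← map_mul, inv_mul_cancel₀ hq₁, map_one, one_mul]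
        ring
      simp [phiHom, key]
  have hψg : ψ (gpoly n q₁ q₂) = 0 := by
    have h2 : ψ (phiHom n q₁ ((∑ k ∈ Finset.range (n + 1),
        (X 0 : MvPolynomial (Fin 2) ℂ) ^ k * (-X 1) ^ (n - k))
        - C q₁ - C ((-1 : ℂ) ^ n * q₂))) = 0 := by
      have h3 := AlgHom.congr_fun hψφ ((∑ k ∈ Finset.range (n + 1),
        (X 0 : MvPolynomial (Fin 2) ℂ) ^ k * (-X 1) ^ (n - k))
        - C q₁ - C ((-1 : ℂ) ^ n * q₂))
      rw [AlgHom.comp_apply] at h3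
      rw [h3, Ideal.Quotient.mkₐ_eq_mk]
      apply Ideal.Quotient.eq_zero_iff_mem.mpr
      rw [hI, qhFlIdeal]
      exact Ideal.subset_span (Set.mem_insert _ _)
    rw [phi_rel1 n q₁ q₂ hq₁, map_neg, neg_eq_zero] at h2
    exact h2
  have hψJ : ∀ a ∈ J, ψ a = 0 := by
    intro a ha
    rw [hJ, Ideal.mem_span_singleton] at ha
    obtain ⟨c, rfl⟩ := ha
    rw [map_mul, hψg, zero_mul]
  set ψbar := Ideal.Quotient.liftₐ J ψ hψJ with hψbar
  have hφmk : ∀ p, φbar (Ideal.Quotient.mk I p) = Ideal.Quotient.mk J (phiHom n q₁ p) := by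
    intro p
    rw [hφbar, Ideal.Quotient.liftₐ_apply]
    rfl
  have hψmk : ∀ p, ψbar (Ideal.Quotient.mk J p) = ψ p := by
    intro p
    rw [hψbar, Ideal.Quotient.liftₐ_apply]
    rfl
  refine ⟨AlgEquiv.ofAlgHom φbar ψbar ?_ ?_⟩
  · apply Ideal.Quotient.algHom_ext
    apply Polynomial.algHom_ext
    simp only [AlgHom.comp_apply, Ideal.Quotient.mkₐ_eq_mk, AlgHom.id_apply]
    rw [hψmk, hψ]
    simp only [Polynomial.aeval_X, hx0]
    rw [hφmk]
    congr 1
    simp [phiHom]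
  · apply Ideal.Quotient.algHom_ext
    refine AlgHom.ext fun p => ?_
    simp only [AlgHom.comp_apply, Ideal.Quotient.mkₐ_eq_mk, AlgHom.id_apply]
    rw [hφmk, hψmk]
    have h4 := AlgHom.congr_fun hψφ p
    rw [AlgHom.comp_apply, Ideal.Quotient.mkₐ_eq_mk] at h4
    exact h4

noncomputable def funReindexAlgEquiv {α β : Type*} (e : α ≃ β) : (α → ℂ) ≃ₐ[ℂ] (β → ℂ) :=
  { Equiv.arrowCongr e (Equiv.refl ℂ) with
    map_mul' := fun _ _ => rfl
    map_add' := fun _ _ => rfl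
    commutes' := fun _ => rfl }

lemma aux_pi (g : Polynomial ℂ) (hg : g ≠ 0) (hsep : g.Separable) :
    ∃ m : ℕ, Nonempty ((Polynomial ℂ ⧸ Ideal.span {g}) ≃ₐ[ℂ] (Fin m → ℂ)) := by
  classical
  set s : Finset ℂ := g.roots.toFinset with hs
  have hnodup : g.roots.Nodup := Polynomial.nodup_roots hsep
  have hsplit : g.Splits := IsAlgClosed.splits g
  have hprod : g = Polynomial.C g.leadingCoeff *
      (g.roots.map fun a => Polynomial.X - Polynomial.C a).prod :=
    hsplit.eq_prod_roots
  have hval : s.val = g.roots := by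
    rw [hs, Multiset.toFinset_val, Multiset.dedup_eq_self.mpr hnodup]
  have hlc : IsUnit (Polynomial.C g.leadingCoeff) :=
    Polynomial.isUnit_C.mpr (isUnit_iff_ne_zero.mpr (Polynomial.leadingCoeff_ne_zero.mpr hg))
  have hassoc : Associated (∏ r ∈ s, (Polynomial.X - Polynomial.C r)) g := by
    refine ⟨hlc.unit, ?_⟩
    rw [IsUnit.unit_spec, mul_comm, Finset.prod_eq_multiset_prod, hval]
    exact hprod.symm
  have hco : ∀ (i j : {x // x ∈ s}), i ≠ j →
      IsCoprime (Polynomial.X - Polynomial.C (i : ℂ)) (Polynomial.X - Polynomial.C (j : ℂ)) :=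
    fun i j hij => Polynomial.pairwise_coprime_X_sub_C Subtype.val_injective hij
  have hspan : Ideal.span {g} =
      ⨅ r : {x // x ∈ s}, Ideal.span {Polynomial.X - Polynomial.C (r : ℂ)} := by
    rw [Ideal.iInf_span_singleton hco,
      Finset.prod_coe_sort s (fun x => Polynomial.X - Polynomial.C x)]
    exact (Ideal.span_singleton_eq_span_singleton.mpr hassoc).symm
  have hcoI : Pairwise (Function.onFun IsCoprime fun r : {x // x ∈ s} =>
      Ideal.span ({Polynomial.X - Polynomial.C (r : ℂ)} : Set (Polynomial ℂ))) :=
    fun i j hij => (Ideal.isCoprime_span_singleton_iff _ _).mpr (hco i j hij)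
  set e2 : (Polynomial ℂ ⧸ Ideal.span {g}) ≃+*
      ∀ r : {x // x ∈ s}, Polynomial ℂ ⧸ Ideal.span {Polynomial.X - Polynomial.C (r : ℂ)} :=
    (Ideal.quotEquivOfEq hspan).trans (Ideal.quotientInfRingEquivPiQuotient _ hcoI) with he2
  have he2c : ∀ c : ℂ, e2 (algebraMap ℂ _ c) = algebraMap ℂ _ c := by
    intro c
    rfl
  set e2a : (Polynomial ℂ ⧸ Ideal.span {g}) ≃ₐ[ℂ]
      ∀ r : {x // x ∈ s}, Polynomial ℂ ⧸ Ideal.span {Polynomial.X - Polynomial.C (r : ℂ)} :=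
    AlgEquiv.ofRingEquiv he2c
  set e3 : (∀ r : {x // x ∈ s}, Polynomial ℂ ⧸ Ideal.span {Polynomial.X - Polynomial.C (r : ℂ)})
      ≃ₐ[ℂ] (∀ _ : {x // x ∈ s}, ℂ) :=
    AlgEquiv.piCongrRight fun r => Polynomial.quotientSpanXSubCAlgEquiv (r : ℂ)
  exact ⟨s.card, ⟨(e2a.trans e3).trans (funReindexAlgEquiv s.equivFin)⟩⟩

lemma geval0 (n : ℕ) (hn : n ≠ 0) (q₁ q₂ : ℂ) :
    (gpoly n q₁ q₂).eval 0 = q₁ + (-1 : ℂ) ^ n * q₂ := by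
  simp [gpoly, wpoly, zero_pow hn]

lemma gderiv (n : ℕ) (q₁ q₂ : ℂ) (hq₁ : q₁ ≠ 0) :
    (gpoly n q₁ q₂).derivative =
      Polynomial.C (-(((n : ℂ) + 1) * (n : ℂ))) *
        (Polynomial.X ^ (n - 1) * (wpoly n q₁) ^ n) := by
  have hC := hCq q₁ hq₁
  have hK : (Polynomial.C ((n + 1 : ℕ) : ℂ)) = Polynomial.C (n : ℂ) + 1 := by
    rw [Nat.cast_add, Nat.cast_one, map_add, map_one]
  have hCn : Polynomial.C (-(((n : ℂ) + 1) * (n : ℂ)))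
      = -((Polynomial.C (n : ℂ) + 1) * Polynomial.C (n : ℂ)) := by
    rw [map_neg, map_mul, map_add, map_one]
  unfold gpoly wpoly
  rw [Polynomial.derivative_add, Polynomial.derivative_C, add_zero,
    Polynomial.derivative_C_mul, Polynomial.derivative_pow,
    Polynomial.derivative_sub, Polynomial.derivative_one,
    Polynomial.derivative_C_mul, Polynomial.derivative_X_pow, zero_sub]
  simp only [Nat.add_sub_cancel]
  rw [hK, hCn]
  unfold wpoly at *
  linear_combination (-((Polynomial.C (n : ℂ) + 1) * Polynomial.C (n : ℂ) *
    (1 - Polynomial.C q₁⁻¹ * Polynomial.X ^ n) ^ n * Polynomial.X ^ (n - 1))) * hC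

lemma gsep (n : ℕ) (hn : 2 ≤ n) (q₁ q₂ : ℂ) (hq₁ : q₁ ≠ 0) (hq₂ : q₂ ≠ 0)
    (hq : q₁ + (-1 : ℂ) ^ n * q₂ ≠ 0) : (gpoly n q₁ q₂).Separable := by
  have hn0 : n ≠ 0 := by omega
  rw [Polynomial.separable_def, gderiv n q₁ q₂ hq₁]
  have hc2 : ((-1 : ℂ) ^ n * q₂) ≠ 0 :=
    mul_ne_zero (pow_ne_zero _ (neg_ne_zero.mpr one_ne_zero)) hq₂
  have h1 : IsCoprime (gpoly n q₁ q₂) Polynomial.X := by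
    refine ((Polynomial.irreducible_X).coprime_iff_not_dvd.mpr ?_).symm
    rw [Polynomial.X_dvd_iff, Polynomial.coeff_zero_eq_eval_zero, geval0 n hn0 q₁ q₂]
    exact hq
  have h2 : IsCoprime (gpoly n q₁ q₂) (wpoly n q₁) := by
    have hinv : Polynomial.C (((-1 : ℂ) ^ n * q₂)⁻¹) * Polynomial.C ((-1 : ℂ) ^ n * q₂) = 1 := by
      rw [← Polynomial.C_mul, inv_mul_cancel₀ hc2, Polynomial.C_1]
    refine ⟨Polynomial.C (((-1 : ℂ) ^ n * q₂)⁻¹),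
      -(Polynomial.C (((-1 : ℂ) ^ n * q₂)⁻¹) * Polynomial.C q₁ * (wpoly n q₁) ^ n), ?_⟩
    unfold gpoly
    linear_combination hinv
  have hcu : IsCoprime (gpoly n q₁ q₂) (Polynomial.C (-(((n : ℂ) + 1) * (n : ℂ)))) := by
    have hnz : (-(((n : ℂ) + 1) * (n : ℂ))) ≠ 0 :=
      neg_ne_zero.mpr (mul_ne_zero (Nat.cast_add_one_ne_zero n) (Nat.cast_ne_zero.mpr hn0))
    refine ⟨0, Polynomial.C ((-(((n : ℂ) + 1) * (n : ℂ)))⁻¹), ?_⟩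
    rw [zero_mul, zero_add, ← Polynomial.C_mul, inv_mul_cancel₀ hnz, Polynomial.C_1]
  exact hcu.mul_right ((h1.pow_right).mul_right (h2.pow_right))

lemma gne (n : ℕ) (hn : 2 ≤ n) (q₁ q₂ : ℂ) (hq : q₁ + (-1 : ℂ) ^ n * q₂ ≠ 0) :
    gpoly n q₁ q₂ ≠ 0 := by
  intro h
  apply hq
  rw [← geval0 n (by omega) q₁ q₂, h, Polynomial.eval_zero]

theorem stmt_0 (n : ℕ) (hn : 2 ≤ n) (q₁ q₂ : ℂ) (hq₁ : q₁ ≠ 0) (hq₂ : q₂ ≠ 0)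
    (hq : q₁ + (-1 : ℂ) ^ n * q₂ ≠ 0) :
    FiniteDimensional ℂ (MvPolynomial (Fin 2) ℂ ⧸ qhFlIdeal n q₁ q₂) ∧
    IsReduced (MvPolynomial (Fin 2) ℂ ⧸ qhFlIdeal n q₁ q₂) ∧
    ∃ m : ℕ, Nonempty ((MvPolynomial (Fin 2) ℂ ⧸ qhFlIdeal n q₁ q₂) ≃ₐ[ℂ] (Fin m → ℂ)) := by
  obtain ⟨e1⟩ := quot_equiv n q₁ q₂ hq₁
  obtain ⟨m, ⟨e2⟩⟩ := aux_pi (gpoly n q₁ q₂) (gne n hn q₁ q₂ hq)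
    (gsep n hn q₁ q₂ hq₁ hq₂ hq)
  set e := e1.trans e2 with he
  refine ⟨?_, ?_, ⟨m, ⟨e⟩⟩⟩
  · exact LinearEquiv.finiteDimensional e.symm.toLinearEquiv
  · exact isReduced_of_injective e.toRingEquiv.toRingHom e.injective
end

section
/- Let n ≥ 2 be an integer and let q₁, q₂ be nonzero complex numbers with q₁ + (−1)ⁿq₂ = 0. Then the quotient ring R = ℂ[h₁,h₂]/( (∑_{k=0}^{n} h₁ᵏ(−h₂)^{n−k}) − q₁ − (−1)ⁿq₂ , h₁^{n+1} − q₁(h₁+h₂) ) has exactly one maximal ideal 𝔪 for which the localization R_𝔪 is not a field, and for this 𝔪 the localization R_𝔪 is isomorphic as a ℂ-algebra to ℂ[ε]/(εⁿ). -/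
noncomputable section
namespace QHaux
open Polynomial

variable (a : ℂ) (m : ℕ) (P Q : ℂ[X])

def mIdeal : Ideal (ℂ[X] ⧸ Ideal.span {P}) :=
  (Ideal.span {X - C a}).map (Ideal.Quotient.mk (Ideal.span {P}))

variable {a m P Q}

lemma span_le_span (hP : P = (X - C a) ^ m * Q) :
    Ideal.span {P} ≤ Ideal.span {(X - C a) ^ m} := by
  rw [Ideal.span_le, Set.singleton_subset_iff, SetLike.mem_coe, Ideal.mem_span_singleton]
  exact ⟨Q, hP⟩

lemma P_mem_span (hm : 1 ≤ m) (hP : P = (X - C a) ^ m * Q) :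
    P ∈ Ideal.span ({X - C a} : Set ℂ[X]) := by
  rw [Ideal.mem_span_singleton, hP]
  exact Dvd.dvd.mul_right (dvd_pow_self _ (by omega)) Q

lemma comap_mIdeal (hm : 1 ≤ m) (hP : P = (X - C a) ^ m * Q) :
    (mIdeal a P).comap (Ideal.Quotient.mk (Ideal.span {P})) = Ideal.span {X - C a} := by
  rw [mIdeal, Ideal.comap_map_of_surjective _ Ideal.Quotient.mk_surjective]
  have h1 : Ideal.comap (Ideal.Quotient.mk (Ideal.span {P})) ⊥ = Ideal.span {P} := by
    rw [← RingHom.ker_eq_comap_bot, Ideal.mk_ker]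
  rw [h1, sup_eq_left]
  rw [Ideal.span_le, Set.singleton_subset_iff, SetLike.mem_coe]
  exact P_mem_span hm hP

lemma mIdeal_isMaximal (hm : 1 ≤ m) (hP : P = (X - C a) ^ m * Q) :
    (mIdeal a P).IsMaximal := by
  apply Ideal.Quotient.maximal_of_isField
  have e1 := DoubleQuot.quotQuotEquivQuotSup (Ideal.span {P}) (Ideal.span {X - C a})
  have hsup : Ideal.span {P} ⊔ Ideal.span {X - C a} = Ideal.span {X - C a} := by
    rw [sup_eq_right, Ideal.span_le, Set.singleton_subset_iff, SetLike.mem_coe]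
    exact P_mem_span hm hP
  rw [hsup] at e1
  have e2 := Polynomial.quotientSpanXSubCAlgEquiv a
  exact (e1.toMulEquiv.trans e2.toMulEquiv).isField (Field.toIsField ℂ)

lemma loc_equiv (hm : 1 ≤ m) (hP : P = (X - C a) ^ m * Q) (hQ : Q.eval a ≠ 0) :
    haveI := (mIdeal_isMaximal hm hP).isPrime
    Nonempty ((Localization.AtPrime (mIdeal a P)) ≃ₐ[ℂ]
      (ℂ[X] ⧸ Ideal.span {(X - C a) ^ m})) := by
  haveI := (mIdeal_isMaximal hm hP).isPrime
  set A := ℂ[X] ⧸ Ideal.span {P} with hA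
  set B := ℂ[X] ⧸ Ideal.span {(X - C a) ^ m} with hB
  set ρ : A →+* B := Ideal.Quotient.factor (span_le_span hP) with hρ
  letI : Algebra A B := ρ.toAlgebra
  have hmap : ∀ t : ℂ[X], algebraMap A B (Ideal.Quotient.mk _ t) = Ideal.Quotient.mk _ t := by
    intro t
    rw [RingHom.algebraMap_toAlgebra, hρ, Ideal.Quotient.factor_mk]
  haveI : IsLocalization (mIdeal a P).primeCompl B := by
    constructor
    constructor
    · rintro ⟨y, hy⟩
      obtain ⟨t, rfl⟩ := Ideal.Quotient.mk_surjective y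
      have hta : eval a t ≠ 0 := by
        intro h0
        exact hy (Ideal.mem_map_of_mem _ (by
          rw [Ideal.mem_span_singleton, dvd_iff_isRoot]; exact h0))
      rw [hmap]
      have hsplit : t = C (eval a t) + (t - C (eval a t)) := by ring
      obtain ⟨s, hs⟩ : (X - C a) ∣ (t - C (eval a t)) := by
        rw [dvd_iff_isRoot]; simp [IsRoot]
      have hnil : IsNilpotent (Ideal.Quotient.mk (Ideal.span {(X - C a) ^ m})
          (t - C (eval a t))) := by
        refine ⟨m, ?_⟩
        rw [← map_pow, Ideal.Quotient.eq_zero_iff_mem, Ideal.mem_span_singleton, hs, mul_pow]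
        exact dvd_mul_right _ _
      have hu : IsUnit (Ideal.Quotient.mk (Ideal.span {(X - C a) ^ m}) (C (eval a t))) := by
        refine isUnit_iff_exists_inv.mpr ⟨Ideal.Quotient.mk _ (C (eval a t)⁻¹), ?_⟩
        rw [← map_mul, ← C_mul, mul_inv_cancel₀ hta, C_1, map_one]
      have heq : Ideal.Quotient.mk (Ideal.span {(X - C a) ^ m}) t
          = Ideal.Quotient.mk _ (C (eval a t)) + Ideal.Quotient.mk _ (t - C (eval a t)) := by
        exact congrArg _ (by ring)
      rw [heq]
      exact IsNilpotent.isUnit_add_left_of_commute hnil hu (Commute.all _ _)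
    · intro z
      obtain ⟨t, rfl⟩ := Ideal.Quotient.mk_surjective z
      exact ⟨⟨Ideal.Quotient.mk _ t, 1⟩, by simp [hmap]; exact (hmap t).symm⟩
    · intro x y hxy
      obtain ⟨u, rfl⟩ := Ideal.Quotient.mk_surjective x
      obtain ⟨v, rfl⟩ := Ideal.Quotient.mk_surjective y
      have h1 : (u - v) ∈ Ideal.span {(X - C a) ^ m} := by
        rw [← Ideal.Quotient.eq_zero_iff_mem, map_sub, sub_eq_zero]
        rw [hmap, hmap] at hxy; exact hxy
      rw [Ideal.mem_span_singleton] at h1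
      obtain ⟨s, hs⟩ := h1
      have hQm : (Ideal.Quotient.mk (Ideal.span {P}) Q) ∈ (mIdeal a P).primeCompl := by
        intro hmem
        have : Q ∈ Ideal.span ({X - C a} : Set ℂ[X]) := by
          rw [← comap_mIdeal hm hP]; exact hmem
        rw [Ideal.mem_span_singleton, dvd_iff_isRoot] at this
        exact hQ this
      refine ⟨⟨_, hQm⟩, ?_⟩
      rw [← map_mul, ← map_mul, Ideal.Quotient.eq, ← mul_sub, hs, ← mul_assoc, hP]
      exact Ideal.mem_span_singleton.mpr ⟨s, by ring⟩
  let re := IsLocalization.algEquiv (mIdeal a P).primeCompl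
      (Localization.AtPrime (mIdeal a P)) B
  refine ⟨AlgEquiv.ofRingEquiv (f := re.toRingEquiv) fun c => ?_⟩
  have h1 : (algebraMap ℂ (Localization.AtPrime (mIdeal a P))) c
      = algebraMap A _ (algebraMap ℂ A c) := IsScalarTower.algebraMap_apply ℂ A _ c
  have h2 : re (algebraMap A _ (algebraMap ℂ A c)) = algebraMap A B (algebraMap ℂ A c) :=
    re.commutes _
  show re ((algebraMap ℂ (Localization.AtPrime (mIdeal a P))) c) = algebraMap ℂ B c
  rw [h1, h2, show (algebraMap ℂ A) c = Ideal.Quotient.mk (Ideal.span {P}) (C c) from rfl, hmap]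
  rfl



lemma maximal_CX (N : Ideal ℂ[X]) (hN : N.IsMaximal) : ∃ b : ℂ, N = Ideal.span {X - C b} := by
  haveI := hN
  haveI : N.IsPrincipal := IsPrincipalIdealRing.principal N
  obtain ⟨p, hp⟩ := this
  have hNbot : N ≠ ⊥ := by
    intro h
    have h1 : Ideal.span ({X} : Set ℂ[X]) = ⊤ :=
      (Ideal.isMaximal_def.mp hN).2 _ (by
        rw [h]
        exact bot_lt_iff_ne_bot.mpr (by simp [Ideal.span_singleton_eq_bot, X_ne_zero]))
    rw [Ideal.span_singleton_eq_top] at h1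
    exact Polynomial.not_isUnit_X h1
  rw [hp] at hNbot ⊢
  have hprime : Prime p := by
    rw [hp] at hN
    haveI : (Ideal.span {p}).IsPrime := hN.isPrime
    have := Submodule.IsPrincipal.prime_generator_of_isPrime (Ideal.span ({p} : Set ℂ[X]))
      (by simpa [Ideal.submodule_span_eq] using hNbot)
    have hgen : Associated (Submodule.IsPrincipal.generator (Ideal.span ({p} : Set ℂ[X]))) p :=
      Ideal.span_singleton_eq_span_singleton.mp (by
        rw [Ideal.span_singleton_generator])
    exact hgen.prime this
  have hirr : Irreducible p := hprime.irreducible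
  have hdeg : p.degree = 1 := IsAlgClosed.degree_eq_one_of_irreducible ℂ hirr
  have hp0 : p ≠ 0 := hprime.ne_zero
  have hc : p.coeff 1 ≠ 0 := by
    have : p.natDegree = 1 := natDegree_eq_of_degree_eq_some hdeg
    rw [← this]
    exact fun h => hp0 (leadingCoeff_eq_zero.mp h)
  refine ⟨-(p.coeff 0 / p.coeff 1), ?_⟩
  rw [Ideal.submodule_span_eq, Ideal.span_singleton_eq_span_singleton]
  refine Associated.symm ⟨(Polynomial.isUnit_C.mpr (isUnit_iff_ne_zero.mpr hc)).unit, ?_⟩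
  have hpc := eq_X_add_C_of_degree_le_one (le_of_eq hdeg)
  have h2 : (X - C (-(p.coeff 0 / p.coeff 1))) * C (p.coeff 1)
      = C (p.coeff 1) * X + C (p.coeff 0) := by
    rw [map_neg, sub_neg_eq_add, add_mul, ← C_mul, div_mul_cancel₀ _ hc]
    ring
  rw [IsUnit.unit_spec]
  exact h2.trans hpc.symm

lemma isField_lin (b : ℂ) : IsField (ℂ[X] ⧸ Ideal.span {(X - C b) ^ 1}) := by
  rw [pow_one]
  exact ((Polynomial.quotientSpanXSubCAlgEquiv b).toMulEquiv).isField (Field.toIsField ℂ)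

lemma not_isField_Xn {n : ℕ} (hn : 2 ≤ n) : ¬ IsField (ℂ[X] ⧸ Ideal.span {(X : ℂ[X]) ^ n}) := by
  intro hf
  have hX : (Ideal.Quotient.mk (Ideal.span {(X : ℂ[X]) ^ n})) X ≠ 0 := by
    rw [Ne, Ideal.Quotient.eq_zero_iff_mem, Ideal.mem_span_singleton]
    intro hdvd
    have := Polynomial.natDegree_le_of_dvd hdvd X_ne_zero
    simp [natDegree_X_pow] at this
    omega
  obtain ⟨y, hy⟩ := hf.mul_inv_cancel hX
  obtain ⟨s, rfl⟩ := Ideal.Quotient.mk_surjective y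
  rw [← map_mul] at hy
  have hmem : (X * s - 1 : ℂ[X]) ∈ Ideal.span {(X : ℂ[X]) ^ n} :=
    Ideal.Quotient.eq.mp (by rw [map_one]; exact hy)
  rw [Ideal.mem_span_singleton] at hmem
  obtain ⟨t, ht⟩ := hmem
  have := congrArg (eval 0) ht
  simp [zero_pow (by omega : n ≠ 0)] at this



variable (n : ℕ) (q₁ : ℂ)

def wpoly : ℂ[X] := 1 - C q₁⁻¹ * X ^ n
def hpoly : ℂ[X] := ∑ j ∈ Finset.range (n + 1), (wpoly n q₁) ^ j
def fpoly : ℂ[X] := ∑ k ∈ Finset.range (n + 1), X ^ k * (X - C q₁⁻¹ * X ^ (n + 1)) ^ (n - k)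

variable {n q₁}

lemma f_eq : fpoly n q₁ = X ^ n * hpoly n q₁ := by
  have hXw : (X : ℂ[X]) - C q₁⁻¹ * X ^ (n + 1) = X * wpoly n q₁ := by
    rw [wpoly]; ring
  have h1 : fpoly n q₁ = ∑ k ∈ Finset.range (n + 1), X ^ n * (wpoly n q₁) ^ (n - k) := by
    rw [fpoly]
    refine Finset.sum_congr rfl fun k hk => ?_
    rw [Finset.mem_range] at hk
    rw [hXw, mul_pow, ← mul_assoc, ← pow_add]
    congr 2
    omega
  have h2 : ∑ k ∈ Finset.range (n + 1), X ^ n * (wpoly n q₁) ^ (n - k)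
      = ∑ j ∈ Finset.range (n + 1), X ^ n * (wpoly n q₁) ^ j := by
    have := Finset.sum_range_reflect (fun j => (X : ℂ[X]) ^ n * (wpoly n q₁) ^ j) (n + 1)
    simpa using this
  rw [h1, h2, hpoly, Finset.mul_sum]

lemma geom : (hpoly n q₁) * (wpoly n q₁ - 1) = (wpoly n q₁) ^ (n + 1) - 1 :=
  geom_sum_mul _ _

lemma eval_w (b : ℂ) : eval b (wpoly n q₁) = 1 - q₁⁻¹ * b ^ n := by simp [wpoly]

lemma eval_h_zero (hn : 1 ≤ n) : eval 0 (hpoly n q₁) = (n + 1 : ℂ) := by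
  simp [hpoly, eval_finset_sum, wpoly, zero_pow (by omega : n ≠ 0)]

lemma eval_h_zero_ne (hn : 1 ≤ n) : eval 0 (hpoly n q₁) ≠ 0 := by
  rw [eval_h_zero hn]
  exact Nat.cast_add_one_ne_zero n

lemma deriv_f_ne (hq₁ : q₁ ≠ 0) (hn : 1 ≤ n) {b : ℂ} (hb : eval b (hpoly n q₁) = 0) :
    eval b (derivative (fpoly n q₁)) ≠ 0 := by
  have hb0 : b ≠ 0 := fun h => eval_h_zero_ne hn (h ▸ hb)
  have hw1 : (eval b (wpoly n q₁)) ^ (n + 1) = 1 := by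
    have h := congrArg (eval b) (geom (n := n) (q₁ := q₁))
    simp only [eval_mul, eval_sub, eval_one, eval_pow, hb, zero_mul] at h
    linear_combination -h
  have hwb : eval b (wpoly n q₁) ≠ 0 := by
    intro h
    rw [h, zero_pow (by omega : n + 1 ≠ 0)] at hw1
    exact zero_ne_one hw1
  have hwm1ne : eval b (wpoly n q₁) - 1 ≠ 0 := by
    rw [eval_w]
    have : q₁⁻¹ * b ^ n ≠ 0 := mul_ne_zero (inv_ne_zero hq₁) (pow_ne_zero _ hb0)
    intro h
    apply this
    linear_combination -h
  have hdwb : eval b (derivative (wpoly n q₁)) = -(q₁⁻¹ * n * b ^ (n - 1)) := by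
    rw [wpoly]
    simp [derivative_X_pow]
    ring
  have hdwbne : eval b (derivative (wpoly n q₁)) ≠ 0 := by
    rw [hdwb, neg_ne_zero]
    exact mul_ne_zero (mul_ne_zero (inv_ne_zero hq₁)
      (Nat.cast_ne_zero.mpr (by omega))) (pow_ne_zero _ hb0)
  -- differentiate the geometric identity and evaluate at b
  have hE := congrArg (fun p => eval b (derivative p)) (geom (n := n) (q₁ := q₁))
  simp only [derivative_mul, derivative_sub, derivative_one, derivative_pow, sub_zero,
    eval_add, eval_mul, eval_sub, eval_one, eval_pow, eval_natCast, eval_C, hb, zero_mul,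
    add_zero, Nat.cast_add, Nat.cast_one] at hE
  have hhd : eval b (derivative (hpoly n q₁)) ≠ 0 := by
    intro h0
    rw [h0, zero_mul] at hE
    have : ((n : ℂ) + 1) * eval b (wpoly n q₁) ^ (n + 1 - 1) * eval b (derivative (wpoly n q₁))
        ≠ 0 := by
      exact mul_ne_zero (mul_ne_zero (Nat.cast_add_one_ne_zero n) (pow_ne_zero _ hwb)) hdwbne
    exact this hE.symm
  rw [f_eq, derivative_mul, derivative_X_pow, eval_add, eval_mul, eval_mul, eval_pow, eval_X,
    eval_mul, eval_pow, eval_X, eval_C, hb, mul_zero, zero_add]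
  exact mul_ne_zero (pow_ne_zero _ hb0) hhd



lemma transfer_loc {R S : Type*} [CommRing R] [CommRing S] [Algebra ℂ R] [Algebra ℂ S]
    (e : R ≃ₐ[ℂ] S) (p : Ideal R) (q : Ideal S) [hp : p.IsPrime] [hq : q.IsPrime]
    (hpq : ∀ x, x ∈ p ↔ e x ∈ q) :
    Nonempty ((Localization.AtPrime p) ≃ₐ[ℂ] (Localization.AtPrime q)) := by
  have H : Submonoid.map e p.primeCompl = q.primeCompl := by
    ext x
    constructor
    · rintro ⟨y, hy, rfl⟩
      exact fun hmem => hy ((hpq y).mpr hmem)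
    · intro hx
      exact ⟨e.symm x, fun hmem => hx (by simpa using (hpq _).mp hmem), e.apply_symm_apply x⟩
  exact ⟨IsLocalization.algEquivOfAlgEquiv (Localization.AtPrime p) (Localization.AtPrime q) e H⟩


lemma bad_classify {n : ℕ} {q₁ : ℂ} (hq₁ : q₁ ≠ 0) (hn : 2 ≤ n)
    (N : Ideal (Polynomial ℂ ⧸ Ideal.span {fpoly n q₁})) (hmax : N.IsMaximal)
    (hbad : haveI := hmax.isPrime; ¬ IsField (Localization.AtPrime N)) :
    N = mIdeal 0 (fpoly n q₁) ∧
      (haveI := hmax.isPrime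
       Nonempty ((Localization.AtPrime N) ≃ₐ[ℂ]
        (Polynomial ℂ ⧸ Ideal.span {(Polynomial.X : Polynomial ℂ) ^ n}))) := by
  have hn1 : 1 ≤ n := by omega
  -- classify N as mIdeal b
  have hcmax : (N.comap (Ideal.Quotient.mk (Ideal.span {fpoly n q₁}))).IsMaximal :=
    Ideal.comap_isMaximal_of_surjective _ Ideal.Quotient.mk_surjective
  obtain ⟨b, hb⟩ := maximal_CX _ hcmax
  have hNeq : N = mIdeal b (fpoly n q₁) := by
    have h1 : N = (N.comap (Ideal.Quotient.mk (Ideal.span {fpoly n q₁}))).map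
        (Ideal.Quotient.mk (Ideal.span {fpoly n q₁})) :=
      (Ideal.map_comap_of_surjective _ Ideal.Quotient.mk_surjective N).symm
    rw [h1, hb]
    rfl
  subst hNeq
  -- f(b) = 0
  have hfb : fpoly n q₁ ∈ Ideal.span {X - C b} := by
    rw [← hb, Ideal.mem_comap]
    have : Ideal.Quotient.mk (Ideal.span {fpoly n q₁}) (fpoly n q₁) = 0 :=
      Ideal.Quotient.eq_zero_iff_mem.mpr (Ideal.subset_span rfl)
    rw [this]
    exact Submodule.zero_mem _
  have hevalb : eval b (fpoly n q₁) = 0 := by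
    rw [Ideal.mem_span_singleton] at hfb
    exact (dvd_iff_isRoot.mp hfb)
  have hcases : b = 0 ∨ eval b (hpoly n q₁) = 0 := by
    rw [f_eq, eval_mul, eval_pow, eval_X] at hevalb
    rcases mul_eq_zero.mp hevalb with h | h
    · left; exact pow_eq_zero_iff (by omega : n ≠ 0) |>.mp h
    · right; exact h
  rcases hcases with rfl | hhb
  · constructor
    · rfl
    · have hfac0 : fpoly n q₁ = (X - C (0 : ℂ)) ^ n * hpoly n q₁ := by
        rw [f_eq, Polynomial.C_0, sub_zero]
      have h0ne : eval 0 (hpoly n q₁) ≠ 0 := eval_h_zero_ne hn1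
      have := loc_equiv hn1 hfac0 h0ne
      rw [show ((X : ℂ[X]) - C 0) = X by rw [Polynomial.C_0, sub_zero]] at this
      exact this
  · exfalso
    have hb0 : b ≠ 0 := fun h => eval_h_zero_ne hn1 (h ▸ hhb)
    obtain ⟨Q, hQf⟩ : (X - C b) ∣ fpoly n q₁ := dvd_iff_isRoot.mpr hevalb
    have hQf1 : fpoly n q₁ = (X - C b) ^ 1 * Q := by rw [pow_one]; exact hQf
    have hQb : eval b Q ≠ 0 := by
      have hdf := deriv_f_ne hq₁ hn1 hhb
      have heq : eval b (derivative (fpoly n q₁)) = eval b Q := by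
        rw [hQf, derivative_mul]
        simp
      rw [heq] at hdf
      exact hdf
    obtain ⟨lb⟩ := loc_equiv le_rfl hQf1 hQb
    exact hbad ((lb.toRingEquiv.toMulEquiv).isField (isField_lin b))

end QHaux
end

open MvPolynomial

namespace QHaux

lemma mv_equiv (n : ℕ) (q₁ q₂ : ℂ) (hq₁ : q₁ ≠ 0)
    (hq : q₁ + (-1 : ℂ) ^ n * q₂ = 0) :
    Nonempty ((MvPolynomial (Fin 2) ℂ ⧸ qhFlIdeal n q₁ q₂) ≃ₐ[ℂ]
      (Polynomial ℂ ⧸ Ideal.span {fpoly n q₁})) := by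
  set I := qhFlIdeal n q₁ q₂ with hI
  set J : Ideal (Polynomial ℂ) := Ideal.span {fpoly n q₁} with hJ
  set gen1 : MvPolynomial (Fin 2) ℂ :=
    (∑ k ∈ Finset.range (n + 1), (X 0 : MvPolynomial (Fin 2) ℂ) ^ k * (-X 1) ^ (n - k))
      - C q₁ - C ((-1 : ℂ) ^ n * q₂) with hgen1
  set gen2 : MvPolynomial (Fin 2) ℂ :=
    (X 0 : MvPolynomial (Fin 2) ℂ) ^ (n + 1) - C q₁ * (X 0 + X 1) with hgen2
  have hgen1I : gen1 ∈ I := Ideal.subset_span (by left; rfl)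
  have hgen2I : gen2 ∈ I := Ideal.subset_span (by right; rfl)
  set gpoly : Polynomial ℂ :=
    Polynomial.C q₁⁻¹ * Polynomial.X ^ (n + 1) - Polynomial.X with hg
  set Φ : MvPolynomial (Fin 2) ℂ →ₐ[ℂ] Polynomial ℂ := MvPolynomial.aeval ![Polynomial.X, gpoly]
    with hΦ
  have hΦ1 : Φ gen1 = fpoly n q₁ := by
    rw [hgen1, hΦ]
    simp only [map_sub, map_sum, map_mul, map_pow, map_neg, MvPolynomial.aeval_X,
      MvPolynomial.aeval_C, Matrix.cons_val_zero, Matrix.cons_val_one, Matrix.head_cons,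
      Polynomial.algebraMap_eq, Polynomial.C_1]
    rw [fpoly]
    have h0 : (Polynomial.C q₁ : Polynomial ℂ) + (-1) ^ n * Polynomial.C q₂ = 0 := by
      have hm1 : ((-1 : Polynomial ℂ)) = Polynomial.C (-1) := by simp
      rw [hm1, ← Polynomial.C_pow, ← Polynomial.C_mul, ← Polynomial.C_add, hq, Polynomial.C_0]
    have : -gpoly = Polynomial.X - Polynomial.C q₁⁻¹ * Polynomial.X ^ (n + 1) := by
      rw [hg]; ring
    rw [this]
    linear_combination -h0
  have hΦ2 : Φ gen2 = 0 := by
    rw [hgen2, hΦ]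
    simp only [map_sub, map_mul, map_add, map_pow, MvPolynomial.aeval_X,
      MvPolynomial.aeval_C, Matrix.cons_val_zero, Matrix.cons_val_one, Matrix.head_cons,
      Polynomial.algebraMap_eq]
    have hc : (Polynomial.C q₁ : Polynomial ℂ) * Polynomial.C q₁⁻¹ = 1 := by
      rw [← Polynomial.C_mul, mul_inv_cancel₀ hq₁, Polynomial.C_1]
    rw [hg]
    linear_combination (-(Polynomial.X : Polynomial ℂ) ^ (n + 1)) * hc
  set φ₀ : MvPolynomial (Fin 2) ℂ →ₐ[ℂ] (Polynomial ℂ ⧸ J) :=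
    (Ideal.Quotient.mkₐ ℂ J).comp Φ with hφ₀
  have hker : ∀ a ∈ I, φ₀ a = 0 := by
    intro a ha
    have hle : I ≤ RingHom.ker φ₀.toRingHom := by
      rw [hI, qhFlIdeal, Ideal.span_le]
      rintro x (rfl | rfl)
      · rw [SetLike.mem_coe, RingHom.mem_ker]
        show φ₀ gen1 = 0
        rw [hφ₀, AlgHom.comp_apply, hΦ1, Ideal.Quotient.mkₐ_eq_mk,
          Ideal.Quotient.eq_zero_iff_mem]
        exact Ideal.subset_span rfl
      · rw [SetLike.mem_coe, RingHom.mem_ker]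
        show φ₀ gen2 = 0
        rw [hφ₀, AlgHom.comp_apply, hΦ2, map_zero]
    exact hle ha
  set φ : (MvPolynomial (Fin 2) ℂ ⧸ I) →ₐ[ℂ] (Polynomial ℂ ⧸ J) :=
    Ideal.Quotient.liftₐ I φ₀ hker with hφ
  set x0 : MvPolynomial (Fin 2) ℂ ⧸ I := Ideal.Quotient.mkₐ ℂ I (X 0) with hx0
  set ψ₀ : Polynomial ℂ →ₐ[ℂ] (MvPolynomial (Fin 2) ℂ ⧸ I) := Polynomial.aeval x0 with hψ₀
  set d : MvPolynomial (Fin 2) ℂ := X 0 + X 1 - C q₁⁻¹ * (X 0) ^ (n + 1) with hd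
  have hdI : d ∈ I := by
    have hc : (C q₁⁻¹ : MvPolynomial (Fin 2) ℂ) * C q₁ = 1 := by
      rw [← C_mul, inv_mul_cancel₀ hq₁, C_1]
    have : d = C (-q₁⁻¹) * gen2 := by
      rw [hd, hgen2, map_neg]
      linear_combination (-(X 0 + X 1 : MvPolynomial (Fin 2) ℂ)) * hc
    rw [this]
    exact Ideal.mul_mem_left _ _ hgen2I
  set S : MvPolynomial (Fin 2) ℂ :=
    ∑ k ∈ Finset.range (n + 1), (X 0 : MvPolynomial (Fin 2) ℂ) ^ k * (-X 1) ^ (n - k) with hS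
  have hSI : S ∈ I := by
    have h0 : (C q₁ : MvPolynomial (Fin 2) ℂ) + C ((-1 : ℂ) ^ n * q₂) = 0 := by
      rw [← C_add, hq, C_0]
    have : S = gen1 := by rw [hgen1]; linear_combination h0
    rw [this]; exact hgen1I
  have hFI : Polynomial.aeval (X 0 : MvPolynomial (Fin 2) ℂ) (fpoly n q₁) ∈ I := by
    have hF : Polynomial.aeval (X 0 : MvPolynomial (Fin 2) ℂ) (fpoly n q₁)
        = ∑ k ∈ Finset.range (n + 1), (X 0 : MvPolynomial (Fin 2) ℂ) ^ k
            * (X 0 - C q₁⁻¹ * (X 0) ^ (n + 1)) ^ (n - k) := by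
      rw [fpoly]
      simp only [map_sum, map_mul, map_pow, map_sub, Polynomial.aeval_X, Polynomial.aeval_C,
        MvPolynomial.algebraMap_eq]
    have hdvd : d ∣ (Polynomial.aeval (X 0 : MvPolynomial (Fin 2) ℂ) (fpoly n q₁) - S) := by
      rw [hF, hS, ← Finset.sum_sub_distrib]
      refine Finset.dvd_sum fun k hk => ?_
      rw [← mul_sub]
      refine Dvd.dvd.mul_left ?_ _
      have := sub_dvd_pow_sub_pow ((X 0 : MvPolynomial (Fin 2) ℂ) - C q₁⁻¹ * (X 0) ^ (n + 1))
        (-X 1) (n - k)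
      have heq : (X 0 : MvPolynomial (Fin 2) ℂ) - C q₁⁻¹ * (X 0) ^ (n + 1) - (-X 1) = d := by
        rw [hd]; ring
      rwa [heq] at this
    obtain ⟨t, ht⟩ := hdvd
    have : Polynomial.aeval (X 0 : MvPolynomial (Fin 2) ℂ) (fpoly n q₁) = S + d * t := by
      rw [← ht]; ring
    rw [this]
    exact Ideal.add_mem _ hSI (Ideal.mul_mem_right _ _ hdI)
  have hkerψ : ∀ a ∈ J, ψ₀ a = 0 := by
    intro a ha
    rw [hJ, Ideal.mem_span_singleton] at ha
    obtain ⟨t, rfl⟩ := ha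
    rw [map_mul]
    have : ψ₀ (fpoly n q₁) = 0 := by
      rw [hψ₀, hx0, Polynomial.aeval_algHom_apply (Ideal.Quotient.mkₐ ℂ I) (X 0) (fpoly n q₁),
        Ideal.Quotient.mkₐ_eq_mk, Ideal.Quotient.eq_zero_iff_mem]
      exact hFI
    rw [this, zero_mul]
  set ψ : (Polynomial ℂ ⧸ J) →ₐ[ℂ] (MvPolynomial (Fin 2) ℂ ⧸ I) :=
    Ideal.Quotient.liftₐ J ψ₀ hkerψ with hψ
  have hψmk : ∀ p : Polynomial ℂ, ψ (Ideal.Quotient.mk J p) = ψ₀ p := fun p => by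
    rw [hψ, Ideal.Quotient.liftₐ_apply]; rfl
  have hφmk : ∀ p : MvPolynomial (Fin 2) ℂ, φ (Ideal.Quotient.mk I p) = φ₀ p := fun p => by
    rw [hφ, Ideal.Quotient.liftₐ_apply]; rfl
  refine ⟨AlgEquiv.ofAlgHom φ ψ ?_ ?_⟩
  · apply Ideal.Quotient.algHom_ext
    apply Polynomial.algHom_ext
    simp only [AlgHom.comp_apply, AlgHom.id_apply, Ideal.Quotient.mkₐ_eq_mk]
    rw [hψmk, hψ₀, Polynomial.aeval_X, hx0, Ideal.Quotient.mkₐ_eq_mk, hφmk, hφ₀,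
      AlgHom.comp_apply, hΦ, Ideal.Quotient.mkₐ_eq_mk]
    simp [MvPolynomial.aeval_X]
  · apply Ideal.Quotient.algHom_ext
    refine MvPolynomial.algHom_ext (Fin.forall_fin_two.mpr ⟨?_, ?_⟩)
    · simp only [AlgHom.comp_apply, AlgHom.id_apply, Ideal.Quotient.mkₐ_eq_mk]
      rw [hφmk, hφ₀, AlgHom.comp_apply, hΦ]
      simp only [MvPolynomial.aeval_X, Matrix.cons_val_zero, Ideal.Quotient.mkₐ_eq_mk]
      rw [hψmk, hψ₀, Polynomial.aeval_X, hx0, Ideal.Quotient.mkₐ_eq_mk]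
    · simp only [AlgHom.comp_apply, AlgHom.id_apply, Ideal.Quotient.mkₐ_eq_mk]
      rw [hφmk, hφ₀, AlgHom.comp_apply, hΦ]
      simp only [MvPolynomial.aeval_X, Matrix.cons_val_one, Matrix.head_cons, Matrix.cons_val_zero,
        Ideal.Quotient.mkₐ_eq_mk]
      rw [hψmk, hψ₀]
      rw [hg, map_sub, map_mul, map_pow, Polynomial.aeval_X, Polynomial.aeval_C, hx0,
        Ideal.Quotient.mkₐ_eq_mk]
      have halg : (algebraMap ℂ (MvPolynomial (Fin 2) ℂ ⧸ I)) q₁⁻¹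
          = Ideal.Quotient.mk I (C q₁⁻¹) := by
        rw [← Ideal.Quotient.mk_algebraMap, MvPolynomial.algebraMap_eq]
      rw [halg, ← map_pow, ← map_mul, ← map_sub, Ideal.Quotient.mk_eq_mk_iff_sub_mem]
      have hneg : C q₁⁻¹ * (X 0 : MvPolynomial (Fin 2) ℂ) ^ (n + 1) - X 0 - X 1 = -d := by
        rw [hd]; ring
      rw [hneg]
      exact neg_mem hdI


end QHaux

theorem stmt_1 (n : ℕ) (hn : 2 ≤ n) (q₁ q₂ : ℂ) (hq₁ : q₁ ≠ 0) (hq₂ : q₂ ≠ 0)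
    (hq : q₁ + (-1 : ℂ) ^ n * q₂ = 0) :
    (∃! 𝔪 : Ideal (MvPolynomial (Fin 2) ℂ ⧸ qhFlIdeal n q₁ q₂),
      ∃ hm : 𝔪.IsMaximal,
        haveI := hm.isPrime
        ¬ IsField (Localization.AtPrime 𝔪)) ∧
    ∀ (𝔪 : Ideal (MvPolynomial (Fin 2) ℂ ⧸ qhFlIdeal n q₁ q₂)) (hm : 𝔪.IsMaximal),
      (haveI := hm.isPrime
       ¬ IsField (Localization.AtPrime 𝔪)) →
      haveI := hm.isPrime
      Nonempty ((Localization.AtPrime 𝔪) ≃ₐ[ℂ]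
        (Polynomial ℂ ⧸ Ideal.span {(Polynomial.X : Polynomial ℂ) ^ n})) := by
  classical
  obtain ⟨e⟩ := QHaux.mv_equiv n q₁ q₂ hq₁ hq
  have hn1 : 1 ≤ n := by omega
  set f := QHaux.fpoly n q₁ with hf
  -- the distinguished maximal ideal
  set 𝔪₀ : Ideal (MvPolynomial (Fin 2) ℂ ⧸ qhFlIdeal n q₁ q₂) :=
    (QHaux.mIdeal 0 f).comap (e : _ →+* _) with h𝔪₀
  have hfac0 : f = (Polynomial.X - Polynomial.C (0 : ℂ)) ^ n * QHaux.hpoly n q₁ := by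
    rw [hf, QHaux.f_eq, Polynomial.C_0, sub_zero]
  have hmax0 : (QHaux.mIdeal 0 f).IsMaximal := QHaux.mIdeal_isMaximal hn1 hfac0
  haveI := hmax0.isPrime
  have hmem₀ : ∀ x, x ∈ 𝔪₀ ↔ e x ∈ QHaux.mIdeal 0 f := fun x => Iff.rfl
  have hmax₀ : 𝔪₀.IsMaximal := Ideal.comap_isMaximal_of_surjective _ e.surjective
  haveI := hmax₀.isPrime
  obtain ⟨l₀⟩ := QHaux.transfer_loc e 𝔪₀ (QHaux.mIdeal 0 f) hmem₀
  obtain ⟨loc0⟩ := QHaux.loc_equiv hn1 hfac0 (QHaux.eval_h_zero_ne hn1)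
  rw [show ((Polynomial.X : Polynomial ℂ) - Polynomial.C 0) = Polynomial.X by
    rw [Polynomial.C_0, sub_zero]] at loc0
  have hnotfield₀ : ¬ IsField (Localization.AtPrime 𝔪₀) := by
    intro hF
    exact QHaux.not_isField_Xn hn
      (((l₀.trans loc0).symm.toRingEquiv.toMulEquiv).isField hF)
  -- processing of an arbitrary bad maximal ideal
  have process : ∀ (𝔪 : Ideal (MvPolynomial (Fin 2) ℂ ⧸ qhFlIdeal n q₁ q₂)) (hm : 𝔪.IsMaximal),
      (haveI := hm.isPrime; ¬ IsField (Localization.AtPrime 𝔪)) →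
      𝔪 = 𝔪₀ ∧
      (haveI := hm.isPrime
       Nonempty ((Localization.AtPrime 𝔪) ≃ₐ[ℂ]
        (Polynomial ℂ ⧸ Ideal.span {(Polynomial.X : Polynomial ℂ) ^ n}))) := by
    intro 𝔪 hm hbad
    haveI := hm.isPrime
    haveI := hm
    set N : Ideal (Polynomial ℂ ⧸ Ideal.span {f}) := 𝔪.comap (e.symm : _ →+* _) with hN
    have hmemN : ∀ x, x ∈ 𝔪 ↔ e x ∈ N := fun x => by
      rw [hN, Ideal.mem_comap]
      simp
    have hmaxN : N.IsMaximal := Ideal.comap_isMaximal_of_surjective _ e.symm.surjective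
    haveI := hmaxN.isPrime
    obtain ⟨lN⟩ := QHaux.transfer_loc e 𝔪 N hmemN
    have hbadN : ¬ IsField (Localization.AtPrime N) := by
      intro hF
      exact hbad ((lN.toRingEquiv.toMulEquiv).isField hF)
    obtain ⟨hN0, hNloc⟩ := QHaux.bad_classify hq₁ hn N hmaxN hbadN
    constructor
    · ext x
      rw [hmemN x, hN0, h𝔪₀, Ideal.mem_comap]
      exact Iff.rfl
    · obtain ⟨lN2⟩ := hNloc
      exact ⟨lN.trans lN2⟩
  refine ⟨⟨𝔪₀, ⟨hmax₀, hnotfield₀⟩, ?_⟩, ?_⟩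
  · rintro y ⟨hmy, hbady⟩
    exact (process y hmy hbady).1
  · intro 𝔪 hm hbad
    exact (process 𝔪 hm hbad).2
end

section
/- Let n ≥ 2 be an even integer. Then the quotient of the polynomial ring ℂ[h₁,h₂] by the ideal generated by (∑_{k=0}^{n} h₁ᵏ(−h₂)^{n−k}) − 2, h₁^{n+1} − (h₁+h₂), and h₁ + h₂ is the zero ring; equivalently, this ideal is the whole ring ℂ[h₁,h₂]. -/
open MvPolynomial

theorem stmt_2 (n : ℕ) (hn : 2 ≤ n) (heven : Even n) :
    Ideal.span
      { (∑ k ∈ Finset.range (n + 1), (X 0 : MvPolynomial (Fin 2) ℂ) ^ k * (-X 1) ^ (n - k))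
          - C (2 : ℂ),
        (X 0 : MvPolynomial (Fin 2) ℂ) ^ (n + 1) - (X 0 + X 1),
        (X 0 : MvPolynomial (Fin 2) ℂ) + X 1 } = (⊤ : Ideal (MvPolynomial (Fin 2) ℂ)) := by
  set a := (∑ k ∈ Finset.range (n + 1), (X 0 : MvPolynomial (Fin 2) ℂ) ^ k * (-X 1) ^ (n - k))
          - C (2 : ℂ) with ha_def
  set b := (X 0 : MvPolynomial (Fin 2) ℂ) ^ (n + 1) - (X 0 + X 1) with hb_def
  set c := (X 0 : MvPolynomial (Fin 2) ℂ) + X 1 with hc_def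
  set I := Ideal.span {a, b, c} with hI
  have ha : a ∈ I := Ideal.subset_span (by simp)
  have hb : b ∈ I := Ideal.subset_span (by simp)
  have hc : c ∈ I := Ideal.subset_span (by simp)
  set f := Ideal.Quotient.mk I with hf
  set x : MvPolynomial (Fin 2) ℂ ⧸ I := f (X 0) with hx_def
  have hcc : f c = 0 := (Ideal.Quotient.eq_zero_iff_mem).2 hc
  have hy : f (X 1) = -x := by
    rw [hc_def, map_add] at hcc
    linear_combination hcc
  have hxn1 : x ^ (n + 1) = 0 := by
    have h0 : f b = 0 := (Ideal.Quotient.eq_zero_iff_mem).2 hb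
    have hcc' : f c = 0 := (Ideal.Quotient.eq_zero_iff_mem).2 hc
    rw [hb_def, map_sub, map_pow, hcc'] at h0
    rwa [sub_zero] at h0
  have hsum : (n + 1 : ℕ) • x ^ n = 2 := by
    have h0 : f a = 0 := (Ideal.Quotient.eq_zero_iff_mem).2 ha
    rw [ha_def, map_sub, map_sum] at h0
    have hterm : ∀ k ∈ Finset.range (n + 1),
        f ((X 0 : MvPolynomial (Fin 2) ℂ) ^ k * (-X 1) ^ (n - k)) = x ^ n := by
      intro k hk
      have hk' : k ≤ n := Nat.lt_succ_iff.mp (Finset.mem_range.mp hk)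
      rw [map_mul, map_pow, map_pow, map_neg, hy, neg_neg, ← hx_def, ← pow_add,
        Nat.add_sub_cancel' hk']
    rw [Finset.sum_congr rfl hterm, Finset.sum_const, Finset.card_range] at h0
    have h2 : f (C (2 : ℂ)) = 2 := by
      rw [map_ofNat (C : ℂ →+* MvPolynomial (Fin 2) ℂ) 2, map_ofNat]
    rw [h2] at h0
    exact sub_eq_zero.mp h0
  have hu : f (C ((2 : ℂ)⁻¹)) * 2 = 1 := by
    have h2 : f (C (2 : ℂ)) = 2 := by
      rw [map_ofNat (C : ℂ →+* MvPolynomial (Fin 2) ℂ) 2, map_ofNat]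
    rw [← h2, ← map_mul, ← C_mul]
    norm_num
  have h2x : (2 : MvPolynomial (Fin 2) ℂ ⧸ I) * x = 0 := by
    calc (2 : MvPolynomial (Fin 2) ℂ ⧸ I) * x = ((n + 1 : ℕ) • x ^ n) * x := by rw [hsum]
    _ = (n + 1 : ℕ) • x ^ (n + 1) := by rw [smul_mul_assoc, pow_succ]
    _ = 0 := by rw [hxn1, smul_zero]
  have hx0 : x = 0 := by
    calc x = (f (C ((2 : ℂ)⁻¹)) * 2) * x := by rw [hu, one_mul]
    _ = f (C ((2 : ℂ)⁻¹)) * (2 * x) := by ring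
    _ = 0 := by rw [h2x, mul_zero]
  have h20 : (2 : MvPolynomial (Fin 2) ℂ ⧸ I) = 0 := by
    rw [← hsum, hx0, zero_pow (by omega : n ≠ 0), smul_zero]
  have h10 : (0 : MvPolynomial (Fin 2) ℂ ⧸ I) = 1 := by
    rw [← hu, h20, mul_zero]
  exact Ideal.Quotient.zero_eq_one_iff.mp h10
end

section
/- Let K be a field of characteristic zero and let n ≥ 4 be an integer. Then the quotient ring K[p,γ]/( pγ , γ² − (n−1)p^{n−2} , p^{n−1} ) is a K-vector space of dimension exactly n. -/
open MvPolynomial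

namespace Stmt11Aux

open Finsupp

variable {K : Type} [Field K]

/-- Polynomials `x` such that `φ (r * x) = 0` for all `r`; this is an ideal. -/
def killer (φ : MvPolynomial (Fin 2) K →ₗ[K] K) : Ideal (MvPolynomial (Fin 2) K) where
  carrier := {x | ∀ r, φ (r * x) = 0}
  add_mem' := by
    intro a b ha hb r
    simp [mul_add, ha r, hb r]
  zero_mem' := by intro r; simp
  smul_mem' := by
    intro s x hx r
    simpa [smul_eq_mul, ← mul_assoc] using hx (r * s)

lemma mem_killer {φ : MvPolynomial (Fin 2) K →ₗ[K] K} {x} :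
    x ∈ killer φ ↔ ∀ r, φ (r * x) = 0 := Iff.rfl

/-- the generators -/
noncomputable def gen1 : MvPolynomial (Fin 2) K := X 0 * X 1
noncomputable def gen2 (c : K) (q : ℕ) : MvPolynomial (Fin 2) K :=
  X 1 ^ 2 - C c * X 0 ^ (q + 2)
noncomputable def gen3 (q : ℕ) : MvPolynomial (Fin 2) K := X 0 ^ (q + 3)

lemma X0X1_eq : (X 0 * X 1 : MvPolynomial (Fin 2) K)
    = monomial (single 0 1 + single 1 1) 1 := by
  rw [X, X, monomial_mul, one_mul]

/- coefficient computations -/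
lemma coeff_mul_gen1_0 (r : MvPolynomial (Fin 2) K) (k : ℕ) :
    coeff (single 0 k) (r * gen1) = 0 := by
  rw [gen1, X0X1_eq, coeff_mul_monomial', if_neg]
  intro h
  have := h 1
  simp [Finsupp.single_apply] at this

lemma coeff_mul_gen1_1 (r : MvPolynomial (Fin 2) K) (t : ℕ) :
    coeff (single 1 t) (r * gen1) = 0 := by
  rw [gen1, X0X1_eq, coeff_mul_monomial', if_neg]
  intro h
  have := h 0
  simp [Finsupp.single_apply] at this

lemma coeff_mul_gen3_0 (r : MvPolynomial (Fin 2) K) (q k : ℕ) (hk : k < q + 3) :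
    coeff (single 0 k) (r * gen3 q) = 0 := by
  rw [gen3, X_pow_eq_monomial, coeff_mul_monomial', if_neg]
  rw [Finsupp.single_le_iff, Finsupp.single_apply, if_pos rfl]
  omega

lemma coeff_mul_gen3_1 (r : MvPolynomial (Fin 2) K) (q t : ℕ) :
    coeff (single 1 t) (r * gen3 q) = 0 := by
  rw [gen3, X_pow_eq_monomial, coeff_mul_monomial', if_neg]
  rw [Finsupp.single_le_iff, Finsupp.single_eq_of_ne (by decide)]
  omega

lemma coeff_mul_gen2 (r : MvPolynomial (Fin 2) K) (c : K) (q : ℕ) (v : Fin 2 →₀ ℕ) :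
    coeff v (r * gen2 c q) =
      (if single 1 2 ≤ v then coeff (v - single 1 2) r else 0)
        - (if single 0 (q+2) ≤ v then coeff (v - single 0 (q+2)) r * c else 0) := by
  rw [gen2, mul_sub, coeff_sub, X_pow_eq_monomial, C_mul_X_pow_eq_monomial,
    coeff_mul_monomial', coeff_mul_monomial']
  congr 1
  split_ifs <;> simp

lemma coeff_mul_gen2_0 (r : MvPolynomial (Fin 2) K) (c : K) (q k : ℕ) (hk : k < q + 2) :
    coeff (single 0 k) (r * gen2 c q) = 0 := by
  rw [coeff_mul_gen2, if_neg, if_neg, sub_zero]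
  · rw [Finsupp.single_le_iff, Finsupp.single_apply, if_pos rfl]; omega
  · rw [Finsupp.single_le_iff, Finsupp.single_eq_of_ne (by decide)]; omega

lemma coeff_mul_gen2_top (r : MvPolynomial (Fin 2) K) (c : K) (q : ℕ) :
    coeff (single 0 (q+2)) (r * gen2 c q) = -(coeff 0 r * c) := by
  rw [coeff_mul_gen2, if_neg, if_pos le_rfl, zero_sub, tsub_self]
  rw [Finsupp.single_le_iff, Finsupp.single_eq_of_ne (by decide)]; omega

lemma coeff_mul_gen2_g1 (r : MvPolynomial (Fin 2) K) (c : K) (q : ℕ) :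
    coeff (single 1 1) (r * gen2 c q) = 0 := by
  rw [coeff_mul_gen2, if_neg, if_neg, sub_zero]
  · rw [Finsupp.single_le_iff, Finsupp.single_eq_of_ne (by decide)]; omega
  · rw [Finsupp.single_le_iff, Finsupp.single_apply, if_pos rfl]; omega

lemma coeff_mul_gen2_g2 (r : MvPolynomial (Fin 2) K) (c : K) (q : ℕ) :
    coeff (single 1 2) (r * gen2 c q) = coeff 0 r := by
  rw [coeff_mul_gen2, if_pos le_rfl, if_neg, sub_zero, tsub_self]
  rw [Finsupp.single_le_iff, Finsupp.single_eq_of_ne (by decide)]; omega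

/-- the dual functionals -/
noncomputable def φ (c : K) (q : ℕ) : Fin (q+4) → (MvPolynomial (Fin 2) K →ₗ[K] K) :=
  fun j =>
    if (j : ℕ) = q + 3 then lcoeff K (single 1 1)
    else if (j : ℕ) = q + 2 then lcoeff K (single 0 (q+2)) + c • lcoeff K (single 1 2)
    else lcoeff K (single 0 (j : ℕ))

/-- the monomial representatives of the basis -/
noncomputable def μ (q : ℕ) : Fin (q+4) → MvPolynomial (Fin 2) K :=
  fun i => if (i : ℕ) = q + 3 then X 1 else X 0 ^ (i : ℕ)

lemma μ_lt (q : ℕ) (i : Fin (q+4)) (h : (i : ℕ) ≠ q+3) :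
    μ (K := K) q i = X 0 ^ (i : ℕ) :=
  if_neg h

lemma μ_last (q : ℕ) (i : Fin (q+4)) (h : (i : ℕ) = q+3) : μ (K := K) q i = X 1 :=
  if_pos h

lemma φ_vanish (c : K) (q : ℕ) (j : Fin (q+4)) (f : MvPolynomial (Fin 2) K)
    (hf : f ∈ Ideal.span {gen1, gen2 c q, gen3 q}) : φ c q j f = 0 := by
  have hjlt := j.isLt
  have hle : Ideal.span {gen1, gen2 c q, gen3 q} ≤ killer (φ c q j) := by
    rw [Ideal.span_le]
    rintro g hg
    simp only [Set.mem_insert_iff, Set.mem_singleton_iff] at hg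
    intro r
    unfold φ
    rcases hg with rfl | rfl | rfl
    · split_ifs with h1 h2
      · simp [lcoeff_apply, coeff_mul_gen1_1]
      · rw [LinearMap.add_apply, LinearMap.smul_apply, lcoeff_apply, lcoeff_apply,
          coeff_mul_gen1_0, coeff_mul_gen1_1]
        simp
      · simp [lcoeff_apply, coeff_mul_gen1_0]
    · split_ifs with h1 h2
      · simp [lcoeff_apply, coeff_mul_gen2_g1]
      · simp only [LinearMap.add_apply, LinearMap.smul_apply, lcoeff_apply, smul_eq_mul,
          coeff_mul_gen2_top, coeff_mul_gen2_g2]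
        ring
      · rw [lcoeff_apply, coeff_mul_gen2_0 _ _ _ _ (by omega)]
    · split_ifs with h1 h2
      · simp [lcoeff_apply, coeff_mul_gen3_1]
      · simp only [LinearMap.add_apply, LinearMap.smul_apply, lcoeff_apply, smul_eq_mul]
        rw [coeff_mul_gen3_0 _ _ _ (by omega), coeff_mul_gen3_1]
        ring
      · rw [lcoeff_apply, coeff_mul_gen3_0 _ _ _ (by omega)]
  have := hle hf
  simpa using this 1

lemma single_ne_single_01 (a b : ℕ) (hb : b ≠ 0) :
    (single (0 : Fin 2) a : Fin 2 →₀ ℕ) ≠ single 1 b := by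
  intro h
  have := DFunLike.congr_fun h 1
  simp [Finsupp.single_apply] at this
  omega

lemma single_inj_iff (a b : ℕ) :
    (single (0 : Fin 2) a : Fin 2 →₀ ℕ) = single 0 b ↔ a = b := by
  constructor
  · exact fun h => Finsupp.single_injective 0 h
  · rintro rfl; rfl

lemma φ_eval (c : K) (q : ℕ) (j i : Fin (q+4)) :
    φ c q j (μ q i) = if i = j then 1 else 0 := by
  have hjlt := j.isLt
  have hilt := i.isLt
  unfold φ μ
  by_cases h1 : (j : ℕ) = q + 3 <;> by_cases h2 : (i : ℕ) = q + 3
  · rw [if_pos h1, if_pos h2, if_pos (Fin.ext (by omega)), lcoeff_apply, X,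
      coeff_monomial, if_pos rfl]
  · rw [if_pos h1, if_neg h2, if_neg (fun h : i = j => h2 (by rw [h]; exact h1)),
      lcoeff_apply, X_pow_eq_monomial, coeff_monomial,
      if_neg (single_ne_single_01 _ _ one_ne_zero)]
  · rw [if_neg h1, if_pos h2, if_neg (fun h : i = j => h1 (by rw [← h]; exact h2))]
    split_ifs with h3
    · rw [LinearMap.add_apply, LinearMap.smul_apply, lcoeff_apply, lcoeff_apply, X,
        coeff_monomial, coeff_monomial,
        if_neg (single_ne_single_01 _ _ (by omega)).symm,
        if_neg (fun h => by have := Finsupp.single_injective (1 : Fin 2) h; omega)]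
      simp
    · rw [lcoeff_apply, X, coeff_monomial,
        if_neg (single_ne_single_01 _ _ one_ne_zero).symm]
  · rw [if_neg h1, if_neg h2]
    by_cases h3 : (j : ℕ) = q + 2
    · rw [if_pos h3, LinearMap.add_apply, LinearMap.smul_apply, lcoeff_apply, lcoeff_apply,
        X_pow_eq_monomial, coeff_monomial, coeff_monomial,
        if_neg (single_ne_single_01 _ _ two_ne_zero)]
      by_cases h4 : (i : ℕ) = q + 2
      · rw [if_pos (by rw [single_inj_iff]; omega), if_pos (Fin.ext (by omega))]
        simp
      · rw [if_neg (fun h => h4 (by rwa [single_inj_iff] at h)),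
          if_neg (fun h : i = j => h4 (by rw [h]; exact h3))]
        simp
    · rw [if_neg h3, lcoeff_apply, X_pow_eq_monomial, coeff_monomial]
      by_cases h4 : i = j
      · rw [if_pos (by rw [single_inj_iff, h4]), if_pos h4]
      · rw [if_neg (fun h => h4 (Fin.ext (by rwa [single_inj_iff] at h))), if_neg h4]

end Stmt11Aux

open Stmt11Aux

set_option maxHeartbeats 1000000 in
theorem stmt_11 (K : Type) [Field K] [CharZero K] (n : ℕ) (hn : 4 ≤ n) :
    Module.finrank K
      (MvPolynomial (Fin 2) K ⧸
        Ideal.span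
          { (X 0 : MvPolynomial (Fin 2) K) * X 1,
            (X 1 : MvPolynomial (Fin 2) K) ^ 2 - C ((n : K) - 1) * X 0 ^ (n - 2),
            (X 0 : MvPolynomial (Fin 2) K) ^ (n - 1) }) = n := by
  obtain ⟨q, rfl⟩ : ∃ q, n = q + 4 := ⟨n - 4, by omega⟩
  have h2 : q + 4 - 2 = q + 2 := by omega
  have h1 : q + 4 - 1 = q + 3 := by omega
  rw [h2, h1]
  set c : K := ((q + 4 : ℕ) : K) - 1 with hc
  set I : Ideal (MvPolynomial (Fin 2) K) :=
    Ideal.span {gen1, gen2 c q, gen3 q} with hI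
  show Module.finrank K (MvPolynomial (Fin 2) K ⧸ I) = q + 4
  set Q := MvPolynomial (Fin 2) K ⧸ I
  set mk : MvPolynomial (Fin 2) K →ₐ[K] Q := Ideal.Quotient.mkₐ K I with hmk
  set b : Fin (q+4) → Q := fun i => mk (μ q i) with hb
  -- linear independence
  have hli : LinearIndependent K b := by
    rw [Fintype.linearIndependent_iff]
    intro g hg j
    have hmem : (∑ i, g i • μ q i) ∈ I := by
      rw [← Ideal.Quotient.eq_zero_iff_mem]
      have : Ideal.Quotient.mk I (∑ i, g i • μ q i) = mk (∑ i, g i • μ q i) := rfl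
      rw [this, map_sum]
      simpa only [map_smul] using hg
    have := φ_vanish c q j _ hmem
    rw [map_sum] at this
    simp only [map_smul, φ_eval, smul_eq_mul, mul_ite, mul_one, mul_zero] at this
    rwa [Finset.sum_ite_eq' Finset.univ j g, if_pos (Finset.mem_univ j)] at this
  -- spanning
  have hzero : ∀ g, g ∈ I → mk g = 0 := by
    intro g hg
    rw [hmk, Ideal.Quotient.mkₐ_eq_mk, Ideal.Quotient.eq_zero_iff_mem]
    exact hg
  have key : ∀ e a : ℕ, mk (X 0 ^ a * X 1 ^ e) ∈ Submodule.span K (Set.range b) := by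
    intro e
    induction e using Nat.strong_induction_on with
    | _ e ih =>
      match e with
      | 0 =>
        intro a
        by_cases ha : a ≤ q + 2
        · have : mk (X 0 ^ a * X 1 ^ 0) = b ⟨a, by omega⟩ := by
            show _ = mk (μ q ⟨a, by omega⟩)
            rw [μ_lt q _ (by simp only [Fin.val_mk]; omega), pow_zero, mul_one]
          rw [this]
          exact Submodule.subset_span (Set.mem_range_self _)
        · have : mk (X 0 ^ a * X 1 ^ 0) = mk (X 0 ^ (a - (q+3))) * mk (gen3 q) := by
            rw [← map_mul]
            congr 1
            rw [gen3, pow_zero, mul_one, ← pow_add]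
            congr 1
            omega
          rw [this, hzero (gen3 q) (Ideal.subset_span (by simp)), mul_zero]
          exact Submodule.zero_mem _
      | 1 =>
        intro a
        match a with
        | 0 =>
          have : mk (X 0 ^ 0 * X 1 ^ 1) = b ⟨q + 3, by omega⟩ := by
            show _ = mk (μ q ⟨q + 3, by omega⟩)
            rw [μ_last q _ rfl, pow_zero, one_mul, pow_one]
          rw [this]
          exact Submodule.subset_span (Set.mem_range_self _)
        | a + 1 =>
          have : mk (X 0 ^ (a+1) * X 1 ^ 1) = mk (X 0 ^ a) * mk gen1 := by
            rw [← map_mul]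
            congr 1
            rw [gen1]
            ring
          rw [this, hzero gen1 (Ideal.subset_span (by simp)), mul_zero]
          exact Submodule.zero_mem _
      | e + 2 =>
        intro a
        have expand : (X 0 ^ a * X 1 ^ (e+2) : MvPolynomial (Fin 2) K)
            = (X 0 ^ a * X 1 ^ e) * gen2 c q + C c * (X 0 ^ (a + (q+2)) * X 1 ^ e) := by
          rw [gen2]
          ring
        have : mk (X 0 ^ a * X 1 ^ (e+2))
            = mk (X 0 ^ a * X 1 ^ e) * mk (gen2 c q)
              + mk (C c) * mk (X 0 ^ (a + (q+2)) * X 1 ^ e) := by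
          rw [← map_mul, ← map_mul, ← map_add, expand]
        rw [this, hzero (gen2 c q) (Ideal.subset_span (by simp)), mul_zero, zero_add]
        have hC : mk (C c) = algebraMap K Q c := by
          rw [hmk]
          exact (Ideal.Quotient.mkₐ K I).commutes c
        rw [hC, Algebra.algebraMap_eq_smul_one, smul_mul_assoc, one_mul]
        exact Submodule.smul_mem _ _ (ih e (by omega) _)
  have hsp : Submodule.span K (Set.range b) = ⊤ := by
    rw [eq_top_iff]
    rintro x -
    obtain ⟨f, rfl⟩ := Ideal.Quotient.mk_surjective x
    have hfx : (Ideal.Quotient.mk I) f = mk f := rfl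
    rw [hfx]
    clear hfx
    induction f using MvPolynomial.induction_on' with
    | monomial d r =>
      have hd : d = Finsupp.single 0 (d 0) + Finsupp.single 1 (d 1) := by
        ext i
        rw [Finsupp.add_apply, Finsupp.single_apply, Finsupp.single_apply]
        match i with
        | 0 => simp
        | 1 => simp
      have : (monomial d r : MvPolynomial (Fin 2) K)
          = r • (X 0 ^ (d 0) * X 1 ^ (d 1)) := by
        rw [smul_eq_C_mul, X_pow_eq_monomial, X_pow_eq_monomial, monomial_mul,
          C_mul_monomial]
        rw [← hd]
        simp
      rw [this, map_smul]
      exact Submodule.smul_mem _ _ (key (d 1) (d 0))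
    | add p₁ p₂ h₁ h₂ =>
      rw [map_add]
      exact Submodule.add_mem _ h₁ h₂
  let B : Module.Basis (Fin (q+4)) K Q := Module.Basis.mk hli (by rw [hsp])
  rw [Module.finrank_eq_card_basis B, Fintype.card_fin]
end
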